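/- In the real octonions 𝕆, the vector w' = (−1, i)ᵀ, obtained by right-multiplying the kernel vector w = (−ℓ, iℓ)ᵀ of B = [[i,1],[ij,j]] by ℓ⁻¹, is not in the kernel of B: Bw' ≠ 0. Hence the set of eigenvectors associated to a left eigenvalue of an octonion matrix is not closed under right scalar multiplication. -/

import Mathlib

/-- Cayley–Dickson double (with γ = -1) of an algebra with involution. -/
def CD (A : Type*) : Type _ := A × A

namespace CD

variable {A : Type*}

instance [AddCommGroup A] : AddCommGroup (CD A) := inferInstanceAs (AddCommGroup (A × A))
noncomputable instance [AddCommGroup A] [Module ℝ A] : Module ℝ (CD A) :=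
  inferInstanceAs (Module ℝ (A × A))

/-- Build an element of the double from its two halves. -/
def mk (a b : A) : CD A := (a, b)

section
set_option linter.unusedSectionVars false

/-- A star operation fixing `1`. -/
class StarOne (A : Type*) [One A] [Star A] : Prop where
  star_one : star (1 : A) = 1

variable [NonAssocRing A] [StarAddMonoid A] [StarOne A]

instance : One (CD A) := ⟨((1 : A), 0)⟩
instance : Mul (CD A) :=
  ⟨fun x y => (x.1 * y.1 - star y.2 * x.2, y.2 * x.1 + x.2 * star y.1)⟩
instance : Star (CD A) := ⟨fun x => (star x.1, -x.2)⟩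

lemma mul_def (x y : CD A) :
    x * y = (x.1 * y.1 - star y.2 * x.2, y.2 * x.1 + x.2 * star y.1) := rfl
lemma one_def : (1 : CD A) = ((1 : A), 0) := rfl
lemma star_def (x : CD A) : star x = (star x.1, -x.2) := rfl
lemma add_def (x y : CD A) : x + y = (x.1 + y.1, x.2 + y.2) := rfl
lemma zero_def : (0 : CD A) = ((0 : A), 0) := rfl

instance instNonAssocRing : NonAssocRing (CD A) where
  __ := (inferInstanceAs (AddCommGroup (A × A)) : AddCommGroup (CD A))
  left_distrib a b c := by
    show a * (b + c) = a * b + a * c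
    erw [mul_def, mul_def, mul_def, add_def, add_def]
    dsimp only
    refine Prod.ext ?_ ?_ <;>
      simp [mul_def, add_def, mul_add, add_mul, star_add] <;> abel
  right_distrib a b c := by
    show (a + b) * c = a * c + b * c
    erw [mul_def, mul_def, mul_def, add_def, add_def]
    dsimp only
    refine Prod.ext ?_ ?_ <;>
      simp [mul_def, add_def, mul_add, add_mul, star_add] <;> abel
  zero_mul a := by
    show (0 : CD A) * a = 0
    rw [mul_def]
    refine Prod.ext ?_ ?_ <;> simp [mul_def, zero_def]
  mul_zero a := by
    show a * (0 : CD A) = 0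
    rw [mul_def]
    refine Prod.ext ?_ ?_ <;> simp [mul_def, zero_def]
  one_mul a := by
    show (1 : CD A) * a = a
    rw [mul_def]
    refine Prod.ext ?_ ?_ <;> simp [mul_def, one_def]
  mul_one a := by
    show a * (1 : CD A) = a
    rw [mul_def]
    refine Prod.ext ?_ ?_ <;> simp [mul_def, one_def, StarOne.star_one]

instance instStarAddMonoid : StarAddMonoid (CD A) where
  star_involutive x := by
    show star (star x) = x
    erw [star_def, star_def]
    dsimp only
    refine Prod.ext ?_ ?_ <;> simp [star_def]
  star_add x y := by
    show star (x + y) = star x + star y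
    erw [star_def, star_def, star_def, add_def, add_def]
    dsimp only
    refine Prod.ext ?_ ?_ <;> simp [star_def, add_def, add_comm]

instance instStarOne : StarOne (CD A) :=
  ⟨Prod.ext (StarOne.star_one) (by erw [star_def]; simp [one_def, star_def])⟩

end

end CD

instance : CD.StarOne ℝ := ⟨by simp⟩

/-- The real octonions, as a three-fold Cayley–Dickson double of ℝ. -/
def Octonion : Type := CD (CD (CD ℝ))

instance : NonAssocRing Octonion := inferInstanceAs (NonAssocRing (CD (CD (CD ℝ))))
instance : StarAddMonoid Octonion := inferInstanceAs (StarAddMonoid (CD (CD (CD ℝ))))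
instance : CD.StarOne Octonion := inferInstanceAs (CD.StarOne (CD (CD (CD ℝ))))
noncomputable instance : Module ℝ Octonion := inferInstanceAs (Module ℝ (CD (CD (CD ℝ))))

/-- The real sedenions, as the Cayley–Dickson double of the octonions. -/
def Sedenion : Type := CD Octonion

instance : NonAssocRing Sedenion := inferInstanceAs (NonAssocRing (CD Octonion))
instance : StarAddMonoid Sedenion := inferInstanceAs (StarAddMonoid (CD Octonion))
instance : CD.StarOne Sedenion := inferInstanceAs (CD.StarOne (CD Octonion))
noncomputable instance : Module ℝ Sedenion := inferInstanceAs (Module ℝ (CD Octonion))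

/-- Assemble a complex number, quaternion, octonion, sedenion from real coordinates. -/
def mkC (f : ℕ → ℝ) (k : ℕ) : CD ℝ := CD.mk (f k) (f (k+1))
def mkH (f : ℕ → ℝ) (k : ℕ) : CD (CD ℝ) := CD.mk (mkC f k) (mkC f (k+2))
def mkO (f : ℕ → ℝ) (k : ℕ) : Octonion := CD.mk (mkH f k) (mkH f (k+4))
def mkS (f : ℕ → ℝ) : Sedenion := CD.mk (mkO f 0) (mkO f 8)

/-- The standard basis `e₀, …, e₁₅` of the sedenions. -/
def sE (n : ℕ) : Sedenion := mkS (fun k => if k = n then 1 else 0)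

/-- The standard basis `e₀, …, e₇` of the octonions. -/
def oE (n : ℕ) : Octonion := mkO (fun k => if k = n then 1 else 0) 0

/-- Powers in a (power-associative) non-associative algebra. -/
def cdpow {A : Type*} [One A] [Mul A] (x : A) : ℕ → A
  | 0 => 1
  | n+1 => cdpow x n * x

lemma omul (x y : Octonion) : x * y = (x.1 * y.1 - star y.2 * x.2, y.2 * x.1 + x.2 * star y.1) := rfl
lemma hmul (x y : CD (CD ℝ)) : x * y = (x.1 * y.1 - star y.2 * x.2, y.2 * x.1 + x.2 * star y.1) := rfl
lemma cmul (x y : CD ℝ) : x * y = (x.1 * y.1 - star y.2 * x.2, y.2 * x.1 + x.2 * star y.1) := rfl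
lemma ostar (x : Octonion) : star x = (star x.1, -x.2) := rfl
lemma hstar (x : CD (CD ℝ)) : star x = (star x.1, -x.2) := rfl
lemma cstar (x : CD ℝ) : star x = (star x.1, -x.2) := rfl
lemma oneg (x : Octonion) : -x = (-x.1, -x.2) := rfl
lemma hneg (x : CD (CD ℝ)) : -x = (-x.1, -x.2) := rfl
lemma cneg (x : CD ℝ) : -x = (-x.1, -x.2) := rfl
lemma oadd (x y : Octonion) : x + y = (x.1 + y.1, x.2 + y.2) := rfl
lemma hadd (x y : CD (CD ℝ)) : x + y = (x.1 + y.1, x.2 + y.2) := rfl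
lemma cadd (x y : CD ℝ) : x + y = (x.1 + y.1, x.2 + y.2) := rfl
lemma osub (x y : Octonion) : x - y = (x.1 - y.1, x.2 - y.2) := rfl
lemma hsub (x y : CD (CD ℝ)) : x - y = (x.1 - y.1, x.2 - y.2) := rfl
lemma csub (x y : CD ℝ) : x - y = (x.1 - y.1, x.2 - y.2) := rfl
lemma oone : (1 : Octonion) = (1, 0) := rfl
lemma hone : (1 : CD (CD ℝ)) = (1, 0) := rfl
lemma cone : (1 : CD ℝ) = (1, 0) := rfl
lemma ozero : (0 : Octonion) = (0, 0) := rfl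
lemma hzero : (0 : CD (CD ℝ)) = (0, 0) := rfl
lemma czero : (0 : CD ℝ) = (0, 0) := rfl

lemma omul1 (x y : Octonion) : (x * y).1 = x.1 * y.1 - star y.2 * x.2 := rfl
lemma omul2 (x y : Octonion) : (x * y).2 = y.2 * x.1 + x.2 * star y.1 := rfl
lemma oneg1 (x : Octonion) : (-x).1 = -x.1 := rfl
lemma oneg2 (x : Octonion) : (-x).2 = -x.2 := rfl
lemma oadd1 (x y : Octonion) : (x + y).1 = x.1 + y.1 := rfl
lemma oadd2 (x y : Octonion) : (x + y).2 = x.2 + y.2 := rfl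
lemma osub1 (x y : Octonion) : (x - y).1 = x.1 - y.1 := rfl
lemma osub2 (x y : Octonion) : (x - y).2 = x.2 - y.2 := rfl
lemma ostar1 (x : Octonion) : (star x).1 = star x.1 := rfl
lemma ostar2 (x : Octonion) : (star x).2 = -x.2 := rfl
lemma oone1 : (1 : Octonion).1 = 1 := rfl
lemma oone2 : (1 : Octonion).2 = 0 := rfl
lemma ozero1 : (0 : Octonion).1 = 0 := rfl
lemma ozero2 : (0 : Octonion).2 = 0 := rfl
lemma oext_iff (x y : Octonion) : x = y ↔ x.1 = y.1 ∧ x.2 = y.2 := Prod.ext_iff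
lemma hmul1 (x y : CD (CD ℝ)) : (x * y).1 = x.1 * y.1 - star y.2 * x.2 := rfl
lemma hmul2 (x y : CD (CD ℝ)) : (x * y).2 = y.2 * x.1 + x.2 * star y.1 := rfl
lemma hneg1 (x : CD (CD ℝ)) : (-x).1 = -x.1 := rfl
lemma hneg2 (x : CD (CD ℝ)) : (-x).2 = -x.2 := rfl
lemma hadd1 (x y : CD (CD ℝ)) : (x + y).1 = x.1 + y.1 := rfl
lemma hadd2 (x y : CD (CD ℝ)) : (x + y).2 = x.2 + y.2 := rfl
lemma hsub1 (x y : CD (CD ℝ)) : (x - y).1 = x.1 - y.1 := rfl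
lemma hsub2 (x y : CD (CD ℝ)) : (x - y).2 = x.2 - y.2 := rfl
lemma hstar1 (x : CD (CD ℝ)) : (star x).1 = star x.1 := rfl
lemma hstar2 (x : CD (CD ℝ)) : (star x).2 = -x.2 := rfl
lemma hone1 : (1 : CD (CD ℝ)).1 = 1 := rfl
lemma hone2 : (1 : CD (CD ℝ)).2 = 0 := rfl
lemma hzero1 : (0 : CD (CD ℝ)).1 = 0 := rfl
lemma hzero2 : (0 : CD (CD ℝ)).2 = 0 := rfl
lemma hext_iff (x y : CD (CD ℝ)) : x = y ↔ x.1 = y.1 ∧ x.2 = y.2 := Prod.ext_iff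
lemma cmul1 (x y : CD ℝ) : (x * y).1 = x.1 * y.1 - star y.2 * x.2 := rfl
lemma cmul2 (x y : CD ℝ) : (x * y).2 = y.2 * x.1 + x.2 * star y.1 := rfl
lemma cneg1 (x : CD ℝ) : (-x).1 = -x.1 := rfl
lemma cneg2 (x : CD ℝ) : (-x).2 = -x.2 := rfl
lemma cadd1 (x y : CD ℝ) : (x + y).1 = x.1 + y.1 := rfl
lemma cadd2 (x y : CD ℝ) : (x + y).2 = x.2 + y.2 := rfl
lemma csub1 (x y : CD ℝ) : (x - y).1 = x.1 - y.1 := rfl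
lemma csub2 (x y : CD ℝ) : (x - y).2 = x.2 - y.2 := rfl
lemma cstar1 (x : CD ℝ) : (star x).1 = star x.1 := rfl
lemma cstar2 (x : CD ℝ) : (star x).2 = -x.2 := rfl
lemma cone1 : (1 : CD ℝ).1 = 1 := rfl
lemma cone2 : (1 : CD ℝ).2 = 0 := rfl
lemma czero1 : (0 : CD ℝ).1 = 0 := rfl
lemma czero2 : (0 : CD ℝ).2 = 0 := rfl
lemma cext_iff (x y : CD ℝ) : x = y ↔ x.1 = y.1 ∧ x.2 = y.2 := Prod.ext_iff

set_option maxHeartbeats 2000000 in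
/-- In the real octonions (with `i = e₁`, `j = e₂`, `ℓ = e₄`,
`ℓ⁻¹ = -ℓ`), the vector `w' = (-1, i)ᵀ` obtained from the kernel vector `w = (-ℓ, iℓ)ᵀ`
of `B = [[i, 1],[ij, j]]` by componentwise right multiplication by `ℓ⁻¹ = -ℓ` is not in
the kernel of `B`: `Bw' ≠ 0`. So eigenvectors for a left eigenvalue of an octonion
matrix are not closed under right scalar multiplication. -/
theorem stmt19 :
    Matrix.mulVec !![oE 1, 1; oE 1 * oE 2, oE 2] ![-(oE 4), oE 1 * oE 4] = 0 ∧
    (∀ k, (![-(oE 4), oE 1 * oE 4] : Fin 2 → Octonion) k * (-(oE 4))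
        = (![-1, oE 1] : Fin 2 → Octonion) k) ∧
    Matrix.mulVec !![oE 1, 1; oE 1 * oE 2, oE 2] ![-1, oE 1] ≠ 0 := by
  refine ⟨?_, ?_, ?_⟩
  · funext k; fin_cases k
    · simp only [Matrix.mulVec, dotProduct, Fin.sum_univ_two]
      show oE 1 * -oE 4 + 1 * (oE 1 * oE 4) = 0
      simp only [omul1, omul2, oneg1, oneg2, oadd1, oadd2, osub1, osub2, ostar1, ostar2, oone1, oone2, ozero1, ozero2, oext_iff, hmul1, hmul2, hneg1, hneg2, hadd1, hadd2, hsub1, hsub2, hstar1, hstar2, hone1, hone2, hzero1, hzero2, hext_iff, cmul1, cmul2, cneg1, cneg2, cadd1, cadd2, csub1, csub2, cstar1, cstar2, cone1, cone2, czero1, czero2, cext_iff]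
      simp [oE, mkO, mkH, mkC, CD.mk]
    · simp only [Matrix.mulVec, dotProduct, Fin.sum_univ_two]
      show oE 1 * oE 2 * -oE 4 + oE 2 * (oE 1 * oE 4) = 0
      simp only [omul1, omul2, oneg1, oneg2, oadd1, oadd2, osub1, osub2, ostar1, ostar2, oone1, oone2, ozero1, ozero2, oext_iff, hmul1, hmul2, hneg1, hneg2, hadd1, hadd2, hsub1, hsub2, hstar1, hstar2, hone1, hone2, hzero1, hzero2, hext_iff, cmul1, cmul2, cneg1, cneg2, cadd1, cadd2, csub1, csub2, cstar1, cstar2, cone1, cone2, czero1, czero2, cext_iff]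
      simp [oE, mkO, mkH, mkC, CD.mk]
  · intro k; fin_cases k
    · show -oE 4 * -oE 4 = -1
      simp only [omul1, omul2, oneg1, oneg2, oadd1, oadd2, osub1, osub2, ostar1, ostar2, oone1, oone2, ozero1, ozero2, oext_iff, hmul1, hmul2, hneg1, hneg2, hadd1, hadd2, hsub1, hsub2, hstar1, hstar2, hone1, hone2, hzero1, hzero2, hext_iff, cmul1, cmul2, cneg1, cneg2, cadd1, cadd2, csub1, csub2, cstar1, cstar2, cone1, cone2, czero1, czero2, cext_iff]
      simp [oE, mkO, mkH, mkC, CD.mk]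
    · show oE 1 * oE 4 * -oE 4 = oE 1
      simp only [omul1, omul2, oneg1, oneg2, oadd1, oadd2, osub1, osub2, ostar1, ostar2, oone1, oone2, ozero1, ozero2, oext_iff, hmul1, hmul2, hneg1, hneg2, hadd1, hadd2, hsub1, hsub2, hstar1, hstar2, hone1, hone2, hzero1, hzero2, hext_iff, cmul1, cmul2, cneg1, cneg2, cadd1, cadd2, csub1, csub2, cstar1, cstar2, cone1, cone2, czero1, czero2, cext_iff]
      simp [oE, mkO, mkH, mkC, CD.mk]
  · intro h
    have := congrFun h 1
    simp only [Matrix.mulVec, dotProduct, Fin.sum_univ_two] at this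
    change oE 1 * oE 2 * -1 + oE 2 * oE 1 = 0 at this
    simp only [omul1, omul2, oneg1, oneg2, oadd1, oadd2, osub1, osub2, ostar1, ostar2, oone1, oone2, ozero1, ozero2, oext_iff, hmul1, hmul2, hneg1, hneg2, hadd1, hadd2, hsub1, hsub2, hstar1, hstar2, hone1, hone2, hzero1, hzero2, hext_iff, cmul1, cmul2, cneg1, cneg2, cadd1, cadd2, csub1, csub2, cstar1, cstar2, cone1, cone2, czero1, czero2, cext_iff] at this
    simp [oE, mkO, mkH, mkC, CD.mk] at this
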